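/- For natural numbers K ≤ n with K ≥ 1, one has (1 - K/n)^{n-K} ≥ e^{-K}. -/

import Mathlib

theorem stmt_6 (K n : ℕ) (hK : 1 ≤ K) (hKn : K ≤ n) :
    (1 - (K : ℝ) / n) ^ (n - K) ≥ Real.exp (-(K : ℝ)) := by
  rcases eq_or_lt_of_le hKn with h | h
  · subst h
    simp [Real.exp_le_one_iff]
  · set m : ℕ := n - K with hm
    have hm1 : 1 ≤ m := by omega
    have hmr : (0:ℝ) < m := by exact_mod_cast hm1
    have hn : (0:ℝ) < n := by exact_mod_cast Nat.pos_of_ne_zero (by omega)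
    have hnm : (n:ℝ) = K + m := by
      have : n = K + m := by omega
      exact_mod_cast this
    have hexp : 0 < Real.exp ((K:ℝ)/m) := Real.exp_pos _
    have key : (n:ℝ) ≤ m * Real.exp ((K:ℝ)/m) := by
      have h2 : (K:ℝ)/m + 1 ≤ Real.exp ((K:ℝ)/m) := Real.add_one_le_exp _
      have h3 : (K:ℝ)/m * m = K := by field_simp
      nlinarith
    have h1 : Real.exp (-((K:ℝ)/m)) ≤ 1 - (K:ℝ)/n := by
      have hmn : (m:ℝ)/n = 1 - (K:ℝ)/n := by rw [hnm]; field_simp; ring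
      rw [← hmn, Real.exp_neg, inv_eq_one_div, div_le_div_iff₀ hexp hn]
      nlinarith
    have hfinal : Real.exp (-(K:ℝ)) = Real.exp (-((K:ℝ)/m)) ^ m := by
      rw [← Real.exp_nat_mul]
      congr 1
      field_simp
    rw [ge_iff_le, hfinal]
    exact pow_le_pow_left₀ (Real.exp_pos _).le h1 m
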